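/- The second-order ODE u'' = u'/((1+x)x) - (x² + x³)/(4(1+x)u³) - x/(2(1+x)u) is solved, on suitable intervals, by u(x) = (C - 2x + 2 ln(1+x)) · (∫ -x/(C - 2x + 2 ln(1+x))² dx)^{1/2} for every C ∈ ℝ, where the antiderivative is chosen so that the expression under the square root is positive. -/

import Mathlib

/-- `v(x) = C - 2x + 2 ln(1+x)`. -/
noncomputable def vEx3 (C : ℝ) : ℝ → ℝ := fun x => C - 2 * x + 2 * Real.log (1 + x)

/-- `u = v · √F` where `F` is an antiderivative of `-x/v(x)²`. -/
noncomputable def uEx3 (C : ℝ) (F : ℝ → ℝ) : ℝ → ℝ := fun x =>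
  vEx3 C x * Real.sqrt (F x)

noncomputable def u1Ex3 (C : ℝ) (F : ℝ → ℝ) : ℝ → ℝ := fun x =>
  (-2 + 2 / (1 + x)) * Real.sqrt (F x) +
    vEx3 C x * (-x / (vEx3 C x) ^ 2 / (2 * Real.sqrt (F x)))

lemma hasDerivAt_vEx3 (C x : ℝ) (hx : 1 + x > 0) :
    HasDerivAt (vEx3 C) (-2 + 2 / (1 + x)) x := by
  have h1 : HasDerivAt (fun t : ℝ => 1 + t) 1 x := by
    simpa using (hasDerivAt_id x).const_add (1 : ℝ)
  have hlog : HasDerivAt (fun t : ℝ => Real.log (1 + t)) (1 / (1 + x)) x := by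
    simpa using h1.log hx.ne'
  have h : HasDerivAt (fun t : ℝ => C - 2 * t + 2 * Real.log (1 + t))
      (0 - 2 * 1 + 2 * (1 / (1 + x))) x :=
    ((hasDerivAt_const x C).sub ((hasDerivAt_id x).const_mul 2)).add (hlog.const_mul 2)
  unfold vEx3
  convert h using 1
  ring

/-- For every `C ∈ ℝ`, the function
`u(x) = (C - 2x + 2 ln(1+x)) · (∫ -x/(C - 2x + 2 ln(1+x))² dx)^{1/2}` satisfies the ODE
`u'' = u'/((1+x)x) - (x² + x³)/(4(1+x)u³) - x/(2(1+x)u)` on any open set where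
`1 + x > 0`, `x ≠ 0`, `v = C - 2x + 2 ln(1+x) ≠ 0`, the antiderivative `F` of `-x/v²`
is positive. -/
theorem stmt_11 (C : ℝ) (F : ℝ → ℝ) (s : Set ℝ) (hs : IsOpen s)
    (hF : ∀ x ∈ s, HasDerivAt F (-x / (vEx3 C x) ^ 2) x)
    (hx : ∀ x ∈ s, 1 + x > 0 ∧ x ≠ 0)
    (hv : ∀ x ∈ s, vEx3 C x ≠ 0)
    (hFpos : ∀ x ∈ s, F x > 0) :
    ∀ x ∈ s, deriv (deriv (uEx3 C F)) x =
      deriv (uEx3 C F) x / ((1 + x) * x) -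
        (x ^ 2 + x ^ 3) / (4 * (1 + x) * (uEx3 C F x) ^ 3) -
        x / (2 * (1 + x) * uEx3 C F x) := by
  -- first derivative at every point of s
  have hu : ∀ x ∈ s, HasDerivAt (uEx3 C F) (u1Ex3 C F x) x := by
    intro x hxs
    have h1x := (hx x hxs).1
    have hg : HasDerivAt (fun t => Real.sqrt (F t))
        (-x / (vEx3 C x) ^ 2 / (2 * Real.sqrt (F x))) x :=
      (hF x hxs).sqrt (hFpos x hxs).ne'
    exact (hasDerivAt_vEx3 C x h1x).mul hg
  intro x hxs
  obtain ⟨h1x, hx0⟩ := hx x hxs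
  have hvne := hv x hxs
  have hFp := hFpos x hxs
  have hgpos : Real.sqrt (F x) > 0 := Real.sqrt_pos.mpr hFp
  have hgne : Real.sqrt (F x) ≠ 0 := hgpos.ne'
  have hg : HasDerivAt (fun t => Real.sqrt (F t))
      (-x / (vEx3 C x) ^ 2 / (2 * Real.sqrt (F x))) x :=
    (hF x hxs).sqrt hFp.ne'
  -- deriv u = u1 near x
  have hderiv1 : deriv (uEx3 C F) =ᶠ[nhds x] u1Ex3 C F := by
    filter_upwards [hs.mem_nhds hxs] with y hy
    exact (hu y hy).deriv
  have hdd : deriv (deriv (uEx3 C F)) x = deriv (u1Ex3 C F) x := hderiv1.deriv_eq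
  -- derivative of u1 at x
  have h1 : HasDerivAt (fun t : ℝ => 1 + t) 1 x := by
    simpa using (hasDerivAt_id x).const_add (1 : ℝ)
  have hA1 : HasDerivAt (fun t : ℝ => -2 + 2 / (1 + t))
      ((0 * (1 + x) - 2 * 1) / (1 + x) ^ 2) x := by
    exact ((hasDerivAt_const x (2:ℝ)).div h1 h1x.ne').const_add (-2)
  have hA := hA1.mul hg
  have hvd := hasDerivAt_vEx3 C x h1x
  have hneg : HasDerivAt (fun t : ℝ => -t) (-1) x := (hasDerivAt_id x).neg
  have hv2 : HasDerivAt (fun t => (vEx3 C t) ^ 2)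
      ((2 : ℕ) * (vEx3 C x) ^ 1 * (-2 + 2 / (1 + x))) x := hvd.pow 2
  have hN := hneg.div hv2 (pow_ne_zero 2 hvne)
  have hD : HasDerivAt (fun t => 2 * Real.sqrt (F t))
      (2 * (-x / (vEx3 C x) ^ 2 / (2 * Real.sqrt (F x)))) x := hg.const_mul 2
  have hDne : (2 : ℝ) * Real.sqrt (F x) ≠ 0 := by positivity
  have hB1 := hN.div hD hDne
  have hB := hvd.mul hB1
  have hu1d : HasDerivAt (u1Ex3 C F) _ x := hA.add hB
  rw [hdd, hu1d.deriv, (hu x hxs).deriv]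
  -- now pure algebra
  show _ = u1Ex3 C F x / ((1 + x) * x) - _ - _
  unfold u1Ex3 uEx3
  simp only [Pi.div_apply]
  set g := Real.sqrt (F x) with hgdef
  set v := vEx3 C x with hvdef
  have h1xne : (1 + x) ≠ 0 := h1x.ne'
  field_simp
  ring
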